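/- Let X be a complex Banach space, A ∈ B(X), and λ ∈ σ(A). Suppose X = M ⊕ N is a direct sum of nonzero closed A-invariant subspaces such that (A − λ)|_M is quasi-nilpotent but not nilpotent and (A − λ)|_N is invertible. Then λ is an isolated point of σ(A) that is not a pole of A. -/

import Mathlib

open Submodule ContinuousLinearMap

section Aux

variable {X : Type*} [NormedAddCommGroup X] [NormedSpace ℂ X] [CompleteSpace X]

/-- If an operator restricts to units on both parts of a closed complemented decomposition,
it is a unit. -/
lemma aux_isUnit (M N : Submodule ℂ X) (hMc : IsClosed (M : Set X)) (hNc : IsClosed (N : Set X))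
    (hcompl : IsCompl M N) [CompleteSpace M] [CompleteSpace N]
    (B : X →L[ℂ] X) (B₁ : M →L[ℂ] M) (B₂ : N →L[ℂ] N)
    (h₁ : ∀ x : M, (B₁ x : X) = B x) (h₂ : ∀ y : N, (B₂ y : X) = B y)
    (hu₁ : IsUnit B₁) (hu₂ : IsUnit B₂) : IsUnit B := by
  obtain ⟨u₁, hu₁⟩ := hu₁
  obtain ⟨u₂, hu₂⟩ := hu₂
  set e := M.prodEquivOfClosedCompl N hcompl hMc hNc with he
  have h_e : ∀ (y : M) (z : N), e (y, z) = (y : X) + (z : X) := by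
    intro y z
    show (M.prodEquivOfIsCompl N hcompl) (y, z) = (y : X) + (z : X)
    simp
  have h_split : ∀ x : X, ((e.symm x).1 : X) + ((e.symm x).2 : X) = x := by
    intro x
    have := e.apply_symm_apply x
    rwa [show e.symm x = ((e.symm x).1, (e.symm x).2) from rfl, h_e] at this
  set G : X →L[ℂ] X :=
    (↑e : (M × N) →L[ℂ] X).comp
      ((ContinuousLinearMap.prodMap (↑u₁⁻¹ : M →L[ℂ] M) (↑u₂⁻¹ : N →L[ℂ] N)).comp
        (↑e.symm : X →L[ℂ] M × N)) with hG
  have hBapp : ∀ x : X, B x = ((B₁ ((e.symm x).1) : X) + ((B₂ ((e.symm x).2) : X))) := by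
    intro x
    conv_lhs => rw [← h_split x]
    rw [map_add, h₁, h₂]
  have hGapp : ∀ x : X,
      G x = (((↑u₁⁻¹ : M →L[ℂ] M) ((e.symm x).1) : X) +
        ((↑u₂⁻¹ : N →L[ℂ] N) ((e.symm x).2) : X)) := by
    intro x
    rw [hG]
    simp only [ContinuousLinearMap.comp_apply, ContinuousLinearEquiv.coe_coe]
    rw [show ((ContinuousLinearMap.prodMap (↑u₁⁻¹ : M →L[ℂ] M) (↑u₂⁻¹ : N →L[ℂ] N))
        (e.symm x)) = (((↑u₁⁻¹ : M →L[ℂ] M) ((e.symm x).1)),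
          ((↑u₂⁻¹ : N →L[ℂ] N) ((e.symm x).2))) from rfl, h_e]
  have hBG : B * G = 1 := by
    ext x
    have hBGx := hBapp (G x)
    have : e.symm (G x) = (((↑u₁⁻¹ : M →L[ℂ] M) ((e.symm x).1)),
        ((↑u₂⁻¹ : N →L[ℂ] N) ((e.symm x).2))) := by
      rw [e.symm_apply_eq, h_e, ← hGapp]
    rw [this] at hBGx
    have k₁ : B₁ ((↑u₁⁻¹ : M →L[ℂ] M) ((e.symm x).1)) = (e.symm x).1 := by
      have : (↑u₁ * ↑u₁⁻¹ : M →L[ℂ] M) ((e.symm x).1) = (e.symm x).1 := by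
        rw [u₁.mul_inv]; rfl
      rwa [ContinuousLinearMap.mul_apply, hu₁] at this
    have k₂ : B₂ ((↑u₂⁻¹ : N →L[ℂ] N) ((e.symm x).2)) = (e.symm x).2 := by
      have : (↑u₂ * ↑u₂⁻¹ : N →L[ℂ] N) ((e.symm x).2) = (e.symm x).2 := by
        rw [u₂.mul_inv]; rfl
      rwa [ContinuousLinearMap.mul_apply, hu₂] at this
    rw [k₁, k₂, h_split] at hBGx
    simpa [ContinuousLinearMap.mul_apply] using hBGx
  have hGB : G * B = 1 := by
    ext x
    have : e.symm (B x) = ((B₁ ((e.symm x).1)), (B₂ ((e.symm x).2))) := by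
      rw [e.symm_apply_eq, h_e, ← hBapp]
    have hGBx := hGapp (B x)
    rw [this] at hGBx
    have k₁ : (↑u₁⁻¹ : M →L[ℂ] M) (B₁ ((e.symm x).1)) = (e.symm x).1 := by
      have : (↑u₁⁻¹ * ↑u₁ : M →L[ℂ] M) ((e.symm x).1) = (e.symm x).1 := by
        rw [u₁.inv_mul]; rfl
      rwa [ContinuousLinearMap.mul_apply, hu₁] at this
    have k₂ : (↑u₂⁻¹ : N →L[ℂ] N) (B₂ ((e.symm x).2)) = (e.symm x).2 := by
      have : (↑u₂⁻¹ * ↑u₂ : N →L[ℂ] N) ((e.symm x).2) = (e.symm x).2 := by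
        rw [u₂.inv_mul]; rfl
      rwa [ContinuousLinearMap.mul_apply, hu₂] at this
    rw [k₁, k₂, h_split] at hGBx
    simpa [ContinuousLinearMap.mul_apply] using hGBx
  exact ⟨⟨B, G, hBG, hGB⟩, rfl⟩

variable {M : Type*} [NormedAddCommGroup M] [NormedSpace ℂ M]

/-- Lift of a continuous linear endomorphism to the quotient by an invariant submodule. -/
noncomputable def liftQCLM (S : Submodule ℂ M) (f : M →L[ℂ] M) (hf : S ≤ S.comap (f : M →ₗ[ℂ] M)) :
    (M ⧸ S) →L[ℂ] (M ⧸ S) :=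
  LinearMap.mkContinuous (S.mapQ S (f : M →ₗ[ℂ] M) hf) ‖f‖ (by
    intro x
    refine le_of_forall_pos_le_add fun ε hε => ?_
    have hδ : (0:ℝ) < ε / (‖f‖ + 1) := by positivity
    obtain ⟨m, hm, hnorm⟩ := Submodule.Quotient.norm_mk_lt x hδ
    have h1 : (S.mapQ S (f : M →ₗ[ℂ] M) hf) x = Submodule.Quotient.mk (f m) := by
      rw [← hm, Submodule.mapQ_apply]; rfl
    rw [h1]
    calc ‖(Submodule.Quotient.mk (f m) : M ⧸ S)‖ ≤ ‖f m‖ := Submodule.Quotient.norm_mk_le S _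
      _ ≤ ‖f‖ * ‖m‖ := f.le_opNorm m
      _ ≤ ‖f‖ * (‖x‖ + ε / (‖f‖ + 1)) := by
          have := norm_nonneg f
          nlinarith [hnorm.le]
      _ ≤ ‖f‖ * ‖x‖ + ε := by
          have h2 : ‖f‖ * (ε / (‖f‖ + 1)) ≤ ε := by
            rw [mul_div_assoc']
            rw [div_le_iff₀ (by positivity)]
            nlinarith [norm_nonneg f, hε.le]
          nlinarith [norm_nonneg f])

@[simp] lemma liftQCLM_apply (S : Submodule ℂ M) (f : M →L[ℂ] M) (hf : S ≤ S.comap (f : M →ₗ[ℂ] M)) (x : M) :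
    liftQCLM S f hf (Submodule.Quotient.mk x) = Submodule.Quotient.mk (f x) := by
  show (S.mapQ S (f : M →ₗ[ℂ] M) hf) (Submodule.Quotient.mk x) = Submodule.Quotient.mk (f x)
  rw [Submodule.mapQ_apply]; rfl

lemma pow_apply_succ (T : M →L[ℂ] M) (j : ℕ) (x : M) :
    (T ^ (j + 1)) x = T ((T ^ j) x) := by
  rw [pow_succ', ContinuousLinearMap.mul_apply]

lemma pow_apply_succ' (T : M →L[ℂ] M) (j : ℕ) (x : M) :
    (T ^ (j + 1)) x = (T ^ j) (T x) := by
  rw [pow_succ, ContinuousLinearMap.mul_apply]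

lemma aux_ker_pow_le (T : M →L[ℂ] M) (k : ℕ) :
    LinearMap.ker (((T ^ k : M →L[ℂ] M) : M →ₗ[ℂ] M)) ≤ LinearMap.ker (((T ^ (k + 1) : M →L[ℂ] M) : M →ₗ[ℂ] M)) := by
  intro x hx
  have hx' : (T ^ k) x = 0 := hx
  show (T ^ (k + 1)) x = 0
  rw [pow_apply_succ, hx', map_zero]

lemma aux_ker_chain (T : M →L[ℂ] M) (n : ℕ)
    (h : LinearMap.ker (((T ^ n : M →L[ℂ] M) : M →ₗ[ℂ] M)) = LinearMap.ker (((T ^ (n + 1) : M →L[ℂ] M) : M →ₗ[ℂ] M))) :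
    ∀ k, n ≤ k → LinearMap.ker (((T ^ k : M →L[ℂ] M) : M →ₗ[ℂ] M)) = LinearMap.ker (((T ^ (k + 1) : M →L[ℂ] M) : M →ₗ[ℂ] M)) := by
  intro k hk
  induction k, hk using Nat.le_induction with
  | base => exact h
  | succ k hk ih =>
    refine le_antisymm (aux_ker_pow_le T (k + 1)) ?_
    intro x hx
    have hx' : (T ^ (k + 1 + 1)) x = 0 := hx
    have h1 : (T ^ (k + 1)) (T x) = 0 := by rw [← pow_apply_succ']; exact hx'
    have h2 : T x ∈ LinearMap.ker (((T ^ k : M →L[ℂ] M) : M →ₗ[ℂ] M)) := ih ▸ h1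
    show (T ^ (k + 1)) x = 0
    rw [pow_apply_succ']
    exact h2

lemma aux_range_chain (T : M →L[ℂ] M) (n : ℕ)
    (h : LinearMap.range (((T ^ n : M →L[ℂ] M) : M →ₗ[ℂ] M)) = LinearMap.range (((T ^ (n + 1) : M →L[ℂ] M) : M →ₗ[ℂ] M))) :
    ∀ k, n ≤ k → LinearMap.range (((T ^ k : M →L[ℂ] M) : M →ₗ[ℂ] M)) = LinearMap.range (((T ^ (k + 1) : M →L[ℂ] M) : M →ₗ[ℂ] M)) := by
  intro k hk
  induction k, hk using Nat.le_induction with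
  | base => exact h
  | succ k hk ih =>
    apply le_antisymm
    · rintro _ ⟨x, rfl⟩
      obtain ⟨w, hw⟩ : (T ^ k) x ∈ LinearMap.range (((T ^ (k + 1) : M →L[ℂ] M) : M →ₗ[ℂ] M)) := ih ▸ ⟨x, rfl⟩
      refine ⟨w, ?_⟩
      show (T ^ (k + 1 + 1)) w = (T ^ (k + 1)) x
      rw [pow_apply_succ T (k + 1), show (T ^ (k + 1)) w = (T ^ k) x from hw, ← pow_apply_succ]
    · rintro _ ⟨x, rfl⟩
      exact ⟨T x, (pow_apply_succ' T (k + 1) x).symm⟩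

end Aux

set_option maxHeartbeats 1000000 in
/-- If `X = M ⊕ N` with `M`, `N` nonzero closed `A`-invariant subspaces such that
`(A − λ)|_M` is quasi-nilpotent but not nilpotent and `(A − λ)|_N` is invertible, then
`λ` is an isolated point of `σ(A)` that is not a pole of `A`. -/
theorem isolated_not_pole_of_decomposition
    {X : Type*} [NormedAddCommGroup X] [NormedSpace ℂ X] [CompleteSpace X]
    (A : X →L[ℂ] X) (lam : ℂ) (hmem : lam ∈ spectrum ℂ A)
    (M N : Submodule ℂ X) (hMc : IsClosed (M : Set X)) (hNc : IsClosed (N : Set X))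
    (hM : M ≠ ⊥) (hN : N ≠ ⊥) (hcompl : IsCompl M N)
    [CompleteSpace M] [CompleteSpace N]
    (A₁ : M →L[ℂ] M) (A₂ : N →L[ℂ] N)
    (hA₁ : ∀ x : M, (A₁ x : X) = A x) (hA₂ : ∀ x : N, (A₂ x : X) = A x)
    (hq : spectrum ℂ (A₁ - lam • 1) = {0}) (hnn : ¬ IsNilpotent (A₁ - lam • 1))
    (hinv : IsUnit (A₂ - lam • 1)) :
    (∃ U ∈ nhds lam, U ∩ spectrum ℂ A = {lam}) ∧
    ¬ ((∃ n : ℕ, LinearMap.ker (((A - lam • 1) ^ n : X →L[ℂ] X) : X →ₗ[ℂ] X) = LinearMap.ker (((A - lam • 1) ^ (n + 1) : X →L[ℂ] X) : X →ₗ[ℂ] X)) ∧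
       (∃ n : ℕ, LinearMap.range (((A - lam • 1) ^ n : X →L[ℂ] X) : X →ₗ[ℂ] X) =
         LinearMap.range (((A - lam • 1) ^ (n + 1) : X →L[ℂ] X) : X →ₗ[ℂ] X))) := by
  have hlamN : lam ∉ spectrum ℂ A₂ := by
    rw [spectrum.notMem_iff, Algebra.algebraMap_eq_smul_one]
    have : lam • (1 : N →L[ℂ] N) - A₂ = -(A₂ - lam • 1) := by abel
    rw [this]
    exact hinv.neg
  constructor
  · refine ⟨(spectrum ℂ A₂)ᶜ, (spectrum.isClosed (𝕜 := ℂ) (A := N →L[ℂ] N) A₂).isOpen_compl.mem_nhds hlamN, ?_⟩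
    ext μ
    simp only [Set.mem_inter_iff, Set.mem_compl_iff, Set.mem_singleton_iff]
    constructor
    · rintro ⟨hμ₂, hμA⟩
      by_contra hne
      -- μ ≠ lam, μ ∉ σ(A₂), μ ∈ σ(A) : contradiction
      have hu₂ : IsUnit (μ • (1 : N →L[ℂ] N) - A₂) := by
        have := spectrum.notMem_iff.mp hμ₂
        rwa [Algebra.algebraMap_eq_smul_one] at this
      have hu₁ : IsUnit (μ • (1 : M →L[ℂ] M) - A₁) := by
        have h0 : (μ - lam) ∉ spectrum ℂ (A₁ - lam • 1) := by
          rw [hq]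
          simpa [sub_eq_zero] using hne
        have h1 := spectrum.notMem_iff.mp h0
        rw [Algebra.algebraMap_eq_smul_one, sub_smul] at h1
        have : μ • (1 : M →L[ℂ] M) - lam • 1 - (A₁ - lam • 1) = μ • 1 - A₁ := by abel
        rwa [this] at h1
      have hu : IsUnit (μ • (1 : X →L[ℂ] X) - A) := by
        refine aux_isUnit M N hMc hNc hcompl (μ • 1 - A) (μ • 1 - A₁) (μ • 1 - A₂)
          (fun x => ?_) (fun y => ?_) hu₁ hu₂
        · simp only [ContinuousLinearMap.sub_apply, ContinuousLinearMap.smul_apply,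
            ContinuousLinearMap.one_apply, AddSubgroupClass.coe_sub, SetLike.val_smul, hA₁]
        · simp only [ContinuousLinearMap.sub_apply, ContinuousLinearMap.smul_apply,
            ContinuousLinearMap.one_apply, AddSubgroupClass.coe_sub, SetLike.val_smul, hA₂]
      have := spectrum.mem_iff.mp hμA
      rw [Algebra.algebraMap_eq_smul_one] at this
      exact this hu
    · rintro rfl
      exact ⟨hlamN, hmem⟩
  -- second part: not a pole
  rintro ⟨⟨n, hn⟩, ⟨m, hm⟩⟩
  set B := A - lam • 1 with hBdef
  set T := A₁ - lam • 1 with hTdef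
  set T₂ := A₂ - lam • 1 with hT₂def
  have hTB1 : ∀ x : M, ((T x : M) : X) = B (x : X) := by
    intro x
    rw [hTdef, hBdef]
    simp only [ContinuousLinearMap.sub_apply, ContinuousLinearMap.smul_apply,
      ContinuousLinearMap.one_apply, AddSubgroupClass.coe_sub, SetLike.val_smul, hA₁]
  have hT₂B1 : ∀ y : N, ((T₂ y : N) : X) = B (y : X) := by
    intro y
    rw [hT₂def, hBdef]
    simp only [ContinuousLinearMap.sub_apply, ContinuousLinearMap.smul_apply,
      ContinuousLinearMap.one_apply, AddSubgroupClass.coe_sub, SetLike.val_smul, hA₂]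
  have hTB : ∀ (k : ℕ) (x : M), (((T ^ k) x : M) : X) = (B ^ k) (x : X) := by
    intro k
    induction k with
    | zero => intro x; simp
    | succ k ih =>
      intro x
      rw [pow_apply_succ' T, pow_apply_succ' B, ih (T x), hTB1]
  have hT₂B : ∀ (k : ℕ) (y : N), (((T₂ ^ k) y : N) : X) = (B ^ k) (y : X) := by
    intro k
    induction k with
    | zero => intro y; simp
    | succ k ih =>
      intro y
      rw [pow_apply_succ' T₂, pow_apply_succ' B, ih (T₂ y), hT₂B1]
  have hkerM : LinearMap.ker (((T ^ n : M →L[ℂ] M) : M →ₗ[ℂ] M)) = LinearMap.ker (((T ^ (n + 1) : M →L[ℂ] M) : M →ₗ[ℂ] M)) := by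
    refine le_antisymm (aux_ker_pow_le T n) ?_
    intro x hx
    have hx' : (T ^ (n + 1)) x = 0 := hx
    have h1 : (B ^ (n + 1)) (x : X) = 0 := by
      rw [← hTB, hx', ZeroMemClass.coe_zero]
    have h2 : (x : X) ∈ LinearMap.ker (((B ^ n : X →L[ℂ] X) : X →ₗ[ℂ] X)) := hn ▸ h1
    have h3 : (((T ^ n) x : M) : X) = 0 := by rw [hTB]; exact h2
    exact ZeroMemClass.coe_eq_zero.mp h3
  have hranM : LinearMap.range (((T ^ m : M →L[ℂ] M) : M →ₗ[ℂ] M)) = LinearMap.range (((T ^ (m + 1) : M →L[ℂ] M) : M →ₗ[ℂ] M)) := by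
    refine le_antisymm ?_ ?_
    · rintro _ ⟨x, rfl⟩
      have h1 : (B ^ m) (x : X) ∈ LinearMap.range (((B ^ (m + 1) : X →L[ℂ] X) : X →ₗ[ℂ] X)) := hm ▸ ⟨x, rfl⟩
      obtain ⟨z, hz⟩ := h1
      set zM : M := M.linearProjOfIsCompl N hcompl z with hzM
      set zN : N := N.linearProjOfIsCompl M hcompl.symm z with hzN
      have hsplit : (zM : X) + (zN : X) = z :=
        Submodule.projection_add_projection_eq_self hcompl z
      have hy : (((T ^ m) x : M) : X)
          = (((T ^ (m + 1)) zM : M) : X) + (((T₂ ^ (m + 1)) zN : N) : X) := by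
        rw [hTB, ← hz, ← hsplit, map_add, hTB, hT₂B]; rfl
      have hd : ((((T ^ m) x - (T ^ (m + 1)) zM : M)) : X) = ((T₂ ^ (m + 1)) zN : X) := by
        rw [AddSubgroupClass.coe_sub, hy]
        abel
      have hzero : (((T ^ m) x - (T ^ (m + 1)) zM : M) : X) = 0 := by
        refine (Submodule.disjoint_def.mp hcompl.disjoint) _ (SetLike.coe_mem _) ?_
        rw [hd]
        exact SetLike.coe_mem _
      have : (T ^ m) x = (T ^ (m + 1)) zM :=
        sub_eq_zero.mp (ZeroMemClass.coe_eq_zero.mp hzero)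
      exact ⟨zM, this.symm⟩
    · rintro _ ⟨x, rfl⟩
      exact ⟨T x, (pow_apply_succ' T m x).symm⟩
  set p := max n m with hpdef
  have hkerp := aux_ker_chain T n hkerM p (le_max_left n m)
  have hranp := aux_range_chain T m hranM p (le_max_right n m)
  set S := LinearMap.ker (((T ^ p : M →L[ℂ] M) : M →ₗ[ℂ] M)) with hSdef
  haveI hScl : IsClosed (S : Set M) := ContinuousLinearMap.isClosed_ker (T ^ p)
  have hT : S ≤ S.comap (T : M →ₗ[ℂ] M) := by
    intro x hx
    show (T ^ p) (T x) = 0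
    rw [← pow_apply_succ']
    have hx' : x ∈ LinearMap.ker (((T ^ (p + 1) : M →L[ℂ] M) : M →ₗ[ℂ] M)) := hkerp ▸ hx
    exact hx' 
  have hStop : S = ⊤ := by
    by_contra hSne
    obtain ⟨x₀, hx₀⟩ : ∃ x : M, x ∉ S := by
      by_contra hc; push_neg at hc; exact hSne (Submodule.eq_top_iff'.mpr hc)
    haveI hQnt : Nontrivial (M ⧸ S) :=
      ⟨⟨Submodule.Quotient.mk x₀, 0, by simpa [Submodule.Quotient.mk_eq_zero] using hx₀⟩⟩
    haveI : Nontrivial ((M ⧸ S) →L[ℂ] (M ⧸ S)) := by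
      refine ⟨1, 0, fun hc => ?_⟩
      obtain ⟨a, b, hab⟩ := exists_pair_ne (M ⧸ S)
      have h1 := congrArg (fun f : (M ⧸ S) →L[ℂ] (M ⧸ S) => f (a - b)) hc
      simp only [ContinuousLinearMap.one_apply, ContinuousLinearMap.zero_apply] at h1
      exact hab (sub_eq_zero.mp h1)
    set T' := liftQCLM S T hT with hT'def
    obtain ⟨μ, hμ⟩ := spectrum.nonempty (A := (M ⧸ S) →L[ℂ] (M ⧸ S)) T'
    rcases eq_or_ne μ 0 with rfl | hμ0
    · -- show T' is a unit, contradiction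
      have hinj : LinearMap.ker (T' : (M ⧸ S) →ₗ[ℂ] (M ⧸ S)) = ⊥ := by
        rw [Submodule.eq_bot_iff]
        intro q hqmem
        obtain ⟨y, rfl⟩ := Submodule.Quotient.mk_surjective S q
        have h1 : T' (Submodule.Quotient.mk y) = 0 := hqmem
        rw [hT'def, liftQCLM_apply] at h1
        have h2 : T y ∈ S := (Submodule.Quotient.mk_eq_zero S).mp h1
        have h3 : (T ^ (p + 1)) y = 0 := by rw [pow_apply_succ']; exact h2
        have h4 : y ∈ S := by
          rw [hkerp]
          exact h3
        exact (Submodule.Quotient.mk_eq_zero S).mpr h4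
      have hsurj : LinearMap.range (T' : (M ⧸ S) →ₗ[ℂ] (M ⧸ S)) = ⊤ := by
        rw [LinearMap.range_eq_top]
        intro q
        obtain ⟨y, rfl⟩ := Submodule.Quotient.mk_surjective S q
        have h1 : (T ^ p) y ∈ LinearMap.range (((T ^ (p + 1) : M →L[ℂ] M) : M →ₗ[ℂ] M)) := hranp ▸ ⟨y, rfl⟩
        obtain ⟨w, hw⟩ := h1
        refine ⟨Submodule.Quotient.mk w, ?_⟩
        show liftQCLM S T hT (Submodule.Quotient.mk w) = Submodule.Quotient.mk y
        rw [liftQCLM_apply, Submodule.Quotient.eq]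
        show (T ^ p) (T w - y) = 0
        rw [map_sub, ← pow_apply_succ', show (T ^ (p + 1)) w = (T ^ p) y from hw, sub_self]
      have hunit : IsUnit T' := by
        set e := ContinuousLinearEquiv.ofBijective T' hinj hsurj with hedef
        refine ⟨⟨T', (e.symm : (M ⧸ S) →L[ℂ] (M ⧸ S)), ?_, ?_⟩, rfl⟩
        · ext q
          show T' (e.symm q) = q
          conv_lhs => rw [← ContinuousLinearEquiv.coeFn_ofBijective T' hinj hsurj, ← hedef]
          exact e.apply_symm_apply q
        · ext q
          show e.symm (T' q) = q
          conv_lhs => rw [← ContinuousLinearEquiv.coeFn_ofBijective T' hinj hsurj, ← hedef]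
          exact e.symm_apply_apply q
      have h0 : (0 : ℂ) ∉ spectrum ℂ T' := by
        rw [spectrum.notMem_iff]
        rw [map_zero, zero_sub]
        exact hunit.neg
      exact h0 hμ
    · -- μ ≠ 0
      have hμT : μ ∉ spectrum ℂ T := by
        rw [hq]
        simpa using hμ0
      have hu := spectrum.notMem_iff.mp hμT
      rw [Algebra.algebraMap_eq_smul_one] at hu
      set W := μ • (1 : M →L[ℂ] M) - T with hWdef
      have h1 : W * (↑hu.unit⁻¹ : M →L[ℂ] M) = 1 := hu.mul_val_inv
      have h2 : (↑hu.unit⁻¹ : M →L[ℂ] M) * W = 1 := hu.val_inv_mul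
      set V : M →L[ℂ] M := ↑hu.unit⁻¹ with hVdef
      have hTW : T = μ • (1 : M →L[ℂ] M) - W := by rw [hWdef]; abel
      have hcent : ∀ C : M →L[ℂ] M, (μ • (1 : M →L[ℂ] M)) * C = C * (μ • 1) := by
        intro C
        rw [← Algebra.algebraMap_eq_smul_one]
        exact Algebra.commutes μ C
      have hcomm : V * T = T * V := by
        rw [hTW, mul_sub, sub_mul, h1, h2, hcent V]
      have hcp : V * (T ^ p) = (T ^ p) * V := (Commute.pow_right (hcomm : Commute V T) p)
      have hV : S ≤ S.comap (V : M →ₗ[ℂ] M) := by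
        intro x hx
        show (T ^ p) (V x) = 0
        rw [← ContinuousLinearMap.mul_apply, ← hcp, ContinuousLinearMap.mul_apply,
          show (T ^ p) x = 0 from hx, map_zero]
      set V' := liftQCLM S V hV with hV'def
      have hWq : ∀ z : M, (μ • (1 : (M ⧸ S) →L[ℂ] (M ⧸ S)) - T') (Submodule.Quotient.mk z)
          = Submodule.Quotient.mk (W z) := by
        intro z
        rw [hWdef]
        simp only [ContinuousLinearMap.sub_apply, ContinuousLinearMap.smul_apply,
          ContinuousLinearMap.one_apply]
        rw [hT'def, liftQCLM_apply, ← Submodule.Quotient.mk_smul, ← Submodule.Quotient.mk_sub]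
      have key1 : (μ • (1 : (M ⧸ S) →L[ℂ] (M ⧸ S)) - T') * V' = 1 := by
        ext q
        obtain ⟨y, rfl⟩ := Submodule.Quotient.mk_surjective S q
        rw [ContinuousLinearMap.mul_apply, hV'def, liftQCLM_apply, hWq,
          ← ContinuousLinearMap.mul_apply, h1]
        rfl
      have key2 : V' * (μ • (1 : (M ⧸ S) →L[ℂ] (M ⧸ S)) - T') = 1 := by
        ext q
        obtain ⟨y, rfl⟩ := Submodule.Quotient.mk_surjective S q
        rw [ContinuousLinearMap.mul_apply, hWq, hV'def, liftQCLM_apply,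
          ← ContinuousLinearMap.mul_apply, h2]
        rfl
      have hμ' : μ ∉ spectrum ℂ T' := by
        rw [spectrum.notMem_iff, Algebra.algebraMap_eq_smul_one]
        exact ⟨⟨μ • 1 - T', V', key1, key2⟩, rfl⟩
      exact hμ' hμ
  have hTp : T ^ p = 0 := by
    ext x
    have hx : x ∈ S := by rw [hStop]; trivial
    have hx' : (T ^ p) x = 0 := hx
    rw [hx']
    simp
  exact hnn ⟨p, hTp⟩
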